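/- Suppose X is invertible. Let λ ∈ ℂ be an eigenvalue of the complex matrix W = X⁻¹Y, and assume n_j − λ r_j ≠ 0 for all j = 1,…,N−1. Then D¹_N(λ) = 0. -/

import Mathlib

/-- Labels `a`, `b`, `c` for the sequences in the collection `𝒜_N`. -/
inductive Label where
  | a : Label
  | b : Label
  | c : Label
deriving DecidableEq

instance : Fintype Label :=
  ⟨{Label.a, Label.b, Label.c}, fun x => by cases x <;> simp⟩

/-- Admissibility of a label sequence (with `n = N - 1` labels, index `i` standing
for `j = i + 1`): the last label is not `a` and, for `2 ≤ j ≤ N-1`, `t_j = c` implies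
`t_{j-1} = a` while `t_j ∈ {a,b}` implies `t_{j-1} ∈ {b,c}`. -/
def Admissible {n : ℕ} (t : Fin n → Label) : Prop :=
  (∀ h : 0 < n, t ⟨n - 1, by omega⟩ ≠ Label.a) ∧
  ∀ j : ℕ, ∀ h : j + 1 < n,
    (t ⟨j + 1, h⟩ = Label.c → t ⟨j, by omega⟩ = Label.a) ∧
    (t ⟨j + 1, h⟩ ≠ Label.c → t ⟨j, by omega⟩ ≠ Label.a)

/-- The collection `𝒜_N` (with `n = N - 1` labels per sequence). -/
noncomputable def AdmSet (n : ℕ) : Finset (Fin n → Label) :=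
  haveI := Classical.decPred (Admissible (n := n))
  Finset.univ.filter Admissible

/-- The value `v_j(t)`: `A_j` if `t_j = a`, `-B_j` if `t_j = b`, `-C_j` if `t_j = c`. -/
def labelVal {n : ℕ} (A B C : ℕ → ℂ) (t : Fin n → Label) (j : Fin n) : ℂ :=
  match t j with
  | Label.a => A (j.val + 1)
  | Label.b => -B (j.val + 1)
  | Label.c => -C (j.val + 1)

/-- `D¹_N = Σ_{t ∈ 𝒜_N, t_1 ≠ c} ∏_{j=1}^{N-1} v_j(t)`, with `n = N - 1`. -/
noncomputable def D1 (n : ℕ) (A B C : ℕ → ℂ) : ℂ :=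
  haveI : DecidablePred fun t : Fin n → Label => ∀ h : 0 < n, t ⟨0, h⟩ ≠ Label.c :=
    Classical.decPred _
  ∑ t ∈ (AdmSet n).filter (fun t => ∀ h : 0 < n, t ⟨0, h⟩ ≠ Label.c),
    ∏ j, labelVal A B C t j

/-- The `(N-1)×(N-1)` tridiagonal complex matrix with 1-indexed subdiagonal entries
`sub_{i+1}` (at position `(i+1, i)`), diagonal entries `dia_i` and superdiagonal
entries `sup_i` (at position `(i, i+1)`), built from real data. -/
def triMatC (n : ℕ) (sub dia sup : ℕ → ℝ) : Matrix (Fin n) (Fin n) ℂ :=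
  Matrix.of fun i j =>
    if i.val = j.val then (dia (i.val + 1) : ℂ)
    else if i.val + 1 = j.val then (sup (i.val + 1) : ℂ)
    else if j.val + 1 = i.val then (sub (i.val + 1) : ℂ)
    else 0

/-- `μ` is an eigenvalue of the square complex matrix `M` if `M v = μ v` for some
nonzero vector `v`. -/
def IsEig {n : ℕ} (M : Matrix (Fin n) (Fin n) ℂ) (μ : ℂ) : Prop :=
  ∃ v : Fin n → ℂ, v ≠ 0 ∧ M.mulVec v = μ • v

open Classical in
noncomputable def Esum (n : ℕ) (A B C : ℕ → ℂ) : ℂ :=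
  ∑ t ∈ (AdmSet n).filter (fun t => ∀ h : 0 < n, t ⟨0, h⟩ = Label.c),
    ∏ j, labelVal A B C t j

open Classical in
lemma D1_eq (n : ℕ) (A B C : ℕ → ℂ) : D1 n A B C =
    ∑ t : Fin n → Label,
      if Admissible t ∧ (∀ h : 0 < n, t ⟨0, h⟩ ≠ Label.c) then ∏ j, labelVal A B C t j else 0 := by
  rw [D1, AdmSet]
  rw [Finset.filter_filter]
  rw [Finset.sum_filter]

open Classical in
lemma Esum_eq (n : ℕ) (A B C : ℕ → ℂ) : Esum n A B C =
    ∑ t : Fin n → Label,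
      if Admissible t ∧ (∀ h : 0 < n, t ⟨0, h⟩ = Label.c) then ∏ j, labelVal A B C t j else 0 := by
  rw [Esum, AdmSet, Finset.filter_filter, Finset.sum_filter]

lemma adm_cons {n : ℕ} (x : Label) (s : Fin n → Label) :
    Admissible (Fin.cons x s : Fin (n+1) → Label) ↔
      ((if h : 0 < n then (Admissible s ∧
          ((s ⟨0, h⟩ = Label.c → x = Label.a) ∧ (s ⟨0, h⟩ ≠ Label.c → x ≠ Label.a)))
        else x ≠ Label.a)) := by
  constructor
  · rintro ⟨hlast, hpair⟩
    split_ifs with h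
    · refine ⟨⟨fun _ => ?_, fun j hj => ?_⟩, ?_⟩
      · have := hlast (by omega)
        have he : (⟨n + 1 - 1, by omega⟩ : Fin (n+1)) = Fin.succ ⟨n - 1, by omega⟩ := by
          simp [Fin.ext_iff]; omega
        rwa [he, Fin.cons_succ] at this
      · have := hpair (j+1) (by omega)
        have e1 : (⟨j + 1 + 1, by omega⟩ : Fin (n+1)) = Fin.succ ⟨j + 1, by omega⟩ := rfl
        have e2 : (⟨j + 1, by omega⟩ : Fin (n+1)) = Fin.succ ⟨j, by omega⟩ := rfl
        rwa [e1, e2, Fin.cons_succ, Fin.cons_succ] at this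
      · have := hpair 0 (by omega)
        have e1 : (⟨0 + 1, by omega⟩ : Fin (n+1)) = Fin.succ ⟨0, h⟩ := rfl
        have e2 : (⟨0, by omega⟩ : Fin (n+1)) = 0 := rfl
        rwa [e1, e2, Fin.cons_succ, Fin.cons_zero] at this
    · have h0 : n = 0 := by omega
      subst h0
      have := hlast (by omega)
      have e : (⟨1 - 1, by omega⟩ : Fin 1) = 0 := rfl
      rwa [e, Fin.cons_zero] at this
  · intro hyp
    split_ifs at hyp with h
    · obtain ⟨⟨hlast, hpair⟩, hx⟩ := hyp
      refine ⟨fun _ => ?_, fun j hj => ?_⟩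
      · have he : (⟨n + 1 - 1, by omega⟩ : Fin (n+1)) = Fin.succ ⟨n - 1, by omega⟩ := by
          simp [Fin.ext_iff]; omega
        rw [he, Fin.cons_succ]
        exact hlast h
      · rcases j with _ | j
        · have e1 : (⟨0 + 1, by omega⟩ : Fin (n+1)) = Fin.succ ⟨0, h⟩ := rfl
          have e2 : (⟨0, by omega⟩ : Fin (n+1)) = 0 := rfl
          rw [e1, e2, Fin.cons_succ, Fin.cons_zero]
          exact hx
        · have e1 : (⟨j + 1 + 1, by omega⟩ : Fin (n+1)) = Fin.succ ⟨j + 1, by omega⟩ := rfl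
          have e2 : (⟨j + 1, by omega⟩ : Fin (n+1)) = Fin.succ ⟨j, by omega⟩ := rfl
          rw [e1, e2, Fin.cons_succ, Fin.cons_succ]
          exact hpair j (by omega)
    · have h0 : n = 0 := by omega
      subst h0
      refine ⟨fun _ => ?_, fun j hj => by omega⟩
      have e : (⟨1 - 1, by omega⟩ : Fin 1) = 0 := rfl
      rw [e, Fin.cons_zero]
      exact hyp

def sh' (k : ℕ) (f : ℕ → ℂ) : ℕ → ℂ := fun j => f (j + k)

def val0 (A B C : ℕ → ℂ) (x : Label) : ℂ :=
  match x with
  | Label.a => A 1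
  | Label.b => -B 1
  | Label.c => -C 1

lemma prod_cons {n : ℕ} (A B C : ℕ → ℂ) (x : Label) (s : Fin n → Label) :
    ∏ j, labelVal A B C (Fin.cons x s) j
      = val0 A B C x * ∏ j, labelVal (sh' 1 A) (sh' 1 B) (sh' 1 C) s j := by
  rw [Fin.prod_univ_succ]
  have h0 : labelVal A B C (Fin.cons x s) 0 = val0 A B C x := by cases x <;> rfl
  rw [h0]
  congr 1

lemma sum_label (g : Label → ℂ) : ∑ x : Label, g x = g Label.a + g Label.b + g Label.c := by
  have : (Finset.univ : Finset Label) = {Label.a, Label.b, Label.c} := by decide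
  rw [this, Finset.sum_insert (by decide), Finset.sum_insert (by decide),
    Finset.sum_singleton]
  ring

lemma sum_consEquiv {n : ℕ} (F : (Fin (n+1) → Label) → ℂ) :
    ∑ t : Fin (n+1) → Label, F t = ∑ x : Label, ∑ s : Fin n → Label, F (Fin.cons x s) := by
  have h := Fintype.sum_equiv (Fin.consEquiv fun _ : Fin (n+1) => Label)
    (fun p => F (Fin.cons p.1 p.2)) F (fun p => rfl)
  rw [← h, Fintype.sum_prod_type]

lemma adm_triv (s : Fin 0 → Label) : Admissible s :=
  ⟨fun h => absurd h (by omega), fun j hj => absurd hj (by omega)⟩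

lemma cons_at_zero {n : ℕ} (x : Label) (s : Fin n → Label) (h : 0 < n + 1) :
    (Fin.cons x s : Fin (n+1) → Label) ⟨0, h⟩ = x := rfl

open Classical in
lemma D1_step (n : ℕ) (A B C : ℕ → ℂ) :
    D1 (n+2) A B C = -(B 1) * D1 (n+1) (sh' 1 A) (sh' 1 B) (sh' 1 C)
      + A 1 * Esum (n+1) (sh' 1 A) (sh' 1 B) (sh' 1 C) := by
  rw [D1_eq, sum_consEquiv, sum_label, D1_eq, Esum_eq]
  have hc : (∑ s : Fin (n+1) → Label,
      if Admissible (Fin.cons Label.c s : Fin (n+2) → Label) ∧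
          (∀ h : 0 < n+2, (Fin.cons Label.c s : Fin (n+2) → Label) ⟨0, h⟩ ≠ Label.c)
        then ∏ j, labelVal A B C (Fin.cons Label.c s) j else 0) = 0 := by
    apply Finset.sum_eq_zero
    intro s _
    rw [if_neg]
    rintro ⟨-, h2⟩
    exact h2 (by omega) (cons_at_zero _ _ _)
  have hb : (∑ s : Fin (n+1) → Label,
      if Admissible (Fin.cons Label.b s : Fin (n+2) → Label) ∧
          (∀ h : 0 < n+2, (Fin.cons Label.b s : Fin (n+2) → Label) ⟨0, h⟩ ≠ Label.c)
        then ∏ j, labelVal A B C (Fin.cons Label.b s) j else 0)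
      = -(B 1) * ∑ s : Fin (n+1) → Label,
          if Admissible s ∧ (∀ h : 0 < n+1, s ⟨0, h⟩ ≠ Label.c)
            then ∏ j, labelVal (sh' 1 A) (sh' 1 B) (sh' 1 C) s j else 0 := by
    rw [Finset.mul_sum]
    apply Finset.sum_congr rfl
    intro s _
    have hiff : (Admissible (Fin.cons Label.b s : Fin (n+2) → Label) ∧
        (∀ h : 0 < n+2, (Fin.cons Label.b s : Fin (n+2) → Label) ⟨0, h⟩ ≠ Label.c))
        ↔ (Admissible s ∧ (∀ h : 0 < n+1, s ⟨0, h⟩ ≠ Label.c)) := by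
      rw [adm_cons]
      simp only [cons_at_zero]
      rw [dif_pos (by omega : 0 < n + 1)]
      constructor
      · rintro ⟨⟨ha, h1, h2⟩, -⟩
        refine ⟨ha, fun h => ?_⟩
        intro hc
        exact (by simp : (Label.b : Label) ≠ Label.a) (h1 hc)
      · rintro ⟨ha, h0⟩
        exact ⟨⟨ha, fun hc => absurd hc (h0 (by omega)), fun _ => by simp⟩,
          fun _ => by simp⟩
    by_cases hq : Admissible s ∧ (∀ h : 0 < n+1, s ⟨0, h⟩ ≠ Label.c)
    · rw [if_pos (hiff.mpr hq), if_pos hq, prod_cons]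
      rfl
    · rw [if_neg (fun hh => hq (hiff.mp hh)), if_neg hq, mul_zero]
  have ha : (∑ s : Fin (n+1) → Label,
      if Admissible (Fin.cons Label.a s : Fin (n+2) → Label) ∧
          (∀ h : 0 < n+2, (Fin.cons Label.a s : Fin (n+2) → Label) ⟨0, h⟩ ≠ Label.c)
        then ∏ j, labelVal A B C (Fin.cons Label.a s) j else 0)
      = A 1 * ∑ s : Fin (n+1) → Label,
          if Admissible s ∧ (∀ h : 0 < n+1, s ⟨0, h⟩ = Label.c)
            then ∏ j, labelVal (sh' 1 A) (sh' 1 B) (sh' 1 C) s j else 0 := by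
    rw [Finset.mul_sum]
    apply Finset.sum_congr rfl
    intro s _
    have hiff : (Admissible (Fin.cons Label.a s : Fin (n+2) → Label) ∧
        (∀ h : 0 < n+2, (Fin.cons Label.a s : Fin (n+2) → Label) ⟨0, h⟩ ≠ Label.c))
        ↔ (Admissible s ∧ (∀ h : 0 < n+1, s ⟨0, h⟩ = Label.c)) := by
      rw [adm_cons]
      simp only [cons_at_zero]
      rw [dif_pos (by omega : 0 < n + 1)]
      constructor
      · rintro ⟨⟨ha, h1, h2⟩, -⟩
        refine ⟨ha, fun h => ?_⟩
        by_contra hne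
        exact (h2 hne) rfl
      · rintro ⟨ha, h0⟩
        exact ⟨⟨ha, fun _ => by trivial, fun hc => absurd (h0 (by omega)) hc⟩,
          fun _ => by simp⟩
    by_cases hq : Admissible s ∧ (∀ h : 0 < n+1, s ⟨0, h⟩ = Label.c)
    · rw [if_pos (hiff.mpr hq), if_pos hq, prod_cons]
      rfl
    · rw [if_neg (fun hh => hq (hiff.mp hh)), if_neg hq, mul_zero]
  rw [ha, hb, hc]
  ring

open Classical in
lemma Esum_step (n : ℕ) (A B C : ℕ → ℂ) :
    Esum (n+1) A B C = -(C 1) * D1 n (sh' 1 A) (sh' 1 B) (sh' 1 C) := by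
  rw [Esum_eq, sum_consEquiv, sum_label, D1_eq]
  have hz : ∀ x : Label, x ≠ Label.c → (∑ s : Fin n → Label,
      if Admissible (Fin.cons x s : Fin (n+1) → Label) ∧
          (∀ h : 0 < n+1, (Fin.cons x s : Fin (n+1) → Label) ⟨0, h⟩ = Label.c)
        then ∏ j, labelVal A B C (Fin.cons x s) j else 0) = 0 := by
    intro x hx
    apply Finset.sum_eq_zero
    intro s _
    rw [if_neg]
    rintro ⟨-, h2⟩
    have h3 := h2 (Nat.succ_pos n)
    rw [cons_at_zero] at h3
    exact hx h3
  rw [hz Label.a (by simp), hz Label.b (by simp)]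
  have hcc : (∑ s : Fin n → Label,
      if Admissible (Fin.cons Label.c s : Fin (n+1) → Label) ∧
          (∀ h : 0 < n+1, (Fin.cons Label.c s : Fin (n+1) → Label) ⟨0, h⟩ = Label.c)
        then ∏ j, labelVal A B C (Fin.cons Label.c s) j else 0)
      = -(C 1) * ∑ s : Fin n → Label,
          if Admissible s ∧ (∀ h : 0 < n, s ⟨0, h⟩ ≠ Label.c)
            then ∏ j, labelVal (sh' 1 A) (sh' 1 B) (sh' 1 C) s j else 0 := by
    rw [Finset.mul_sum]
    apply Finset.sum_congr rfl
    intro s _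
    have hiff : (Admissible (Fin.cons Label.c s : Fin (n+1) → Label) ∧
        (∀ h : 0 < n+1, (Fin.cons Label.c s : Fin (n+1) → Label) ⟨0, h⟩ = Label.c))
        ↔ (Admissible s ∧ (∀ h : 0 < n, s ⟨0, h⟩ ≠ Label.c)) := by
      rw [adm_cons]
      constructor
      · rintro ⟨hd, -⟩
        by_cases h : 0 < n
        · rw [dif_pos h] at hd
          obtain ⟨ha, h1, h2⟩ := hd
          refine ⟨ha, fun _ => ?_⟩
          intro hc
          exact (by simp : (Label.c : Label) ≠ Label.a) (h1 hc)
        · have h0 : n = 0 := by omega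
          subst h0
          exact ⟨adm_triv s, fun hh => absurd hh (by omega)⟩
      · rintro ⟨ha, h0⟩
        refine ⟨?_, fun _ => cons_at_zero _ _ _⟩
        by_cases h : 0 < n
        · rw [dif_pos h]
          exact ⟨ha, fun hc => absurd hc (h0 h), fun _ => by simp⟩
        · rw [dif_neg h]
          simp
    by_cases hq : Admissible s ∧ (∀ h : 0 < n, s ⟨0, h⟩ ≠ Label.c)
    · rw [if_pos (hiff.mpr hq), if_pos hq, prod_cons]
      rfl
    · rw [if_neg (fun hh => hq (hiff.mp hh)), if_neg hq, mul_zero]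
  rw [hcc]
  ring

-- appended to comb.lean content for testing
open Classical in
lemma D1_zero (A B C : ℕ → ℂ) : D1 0 A B C = 1 := by
  rw [D1_eq]
  rw [Fintype.sum_unique]
  rw [if_pos ⟨adm_triv _, fun h => absurd h (by omega)⟩]
  simp

open Classical in
lemma D1_one (A B C : ℕ → ℂ) : D1 1 A B C = -(B 1) := by
  rw [D1_eq, sum_consEquiv, sum_label]
  have hu : ∀ (G : (Fin 0 → Label) → ℂ), (∑ s : Fin 0 → Label, G s) = G default :=
    fun G => Fintype.sum_unique G
  rw [hu, hu, hu]
  have ha : ¬(Admissible (Fin.cons Label.a default : Fin 1 → Label) ∧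
      (∀ h : 0 < 1, (Fin.cons Label.a default : Fin 1 → Label) ⟨0, h⟩ ≠ Label.c)) := by
    rintro ⟨hadm, -⟩
    rw [adm_cons, dif_neg (by omega)] at hadm
    exact hadm rfl
  have hc : ¬(Admissible (Fin.cons Label.c default : Fin 1 → Label) ∧
      (∀ h : 0 < 1, (Fin.cons Label.c default : Fin 1 → Label) ⟨0, h⟩ ≠ Label.c)) := by
    rintro ⟨-, hh⟩
    exact hh (by omega) (cons_at_zero _ _ _)
  have hb : (Admissible (Fin.cons Label.b default : Fin 1 → Label) ∧
      (∀ h : 0 < 1, (Fin.cons Label.b default : Fin 1 → Label) ⟨0, h⟩ ≠ Label.c)) := by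
    constructor
    · rw [adm_cons, dif_neg (by omega)]
      simp
    · intro h
      rw [cons_at_zero]
      simp
  rw [if_pos hb, if_neg ha, if_neg hc]
  rw [Fin.prod_univ_one]
  show 0 + labelVal A B C (Fin.cons Label.b default) 0 + 0 = -(B 1)
  simp [labelVal]

lemma sh_sh (f : ℕ → ℂ) : sh' 1 (sh' 1 f) = sh' 2 f := by
  funext j
  simp [sh', Nat.add_assoc]



def ctri (n : ℕ) (sub dia sup : ℕ → ℂ) : Matrix (Fin n) (Fin n) ℂ :=
  Matrix.of fun i j =>
    if i.val = j.val then dia (i.val + 1)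
    else if i.val + 1 = j.val then sup (i.val + 1)
    else if j.val + 1 = i.val then sub (i.val + 1)
    else 0


lemma succAbove_val {n : ℕ} (p : Fin (n+1)) (i : Fin n) :
    (p.succAbove i).val = if i.val < p.val then i.val else i.val + 1 := by
  rw [Fin.succAbove]
  split_ifs with h h' h'
  · rfl
  · exact absurd h (by simpa [Fin.lt_def] using h')
  · exact absurd h' (by simpa [Fin.lt_def] using h)
  · rfl

lemma ctri_apply (n : ℕ) (sub dia sup : ℕ → ℂ) (i j : Fin n) :
    ctri n sub dia sup i j =
    if i.val = j.val then dia (i.val + 1)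
    else if i.val + 1 = j.val then sup (i.val + 1)
    else if j.val + 1 = i.val then sub (i.val + 1)
    else 0 := rfl

lemma ctri_det_rec (n : ℕ) (sub dia sup : ℕ → ℂ) :
    (ctri (n+2) sub dia sup).det
      = dia 1 * (ctri (n+1) (sh' 1 sub) (sh' 1 dia) (sh' 1 sup)).det
        - sub 2 * (sup 1 * (ctri n (sh' 2 sub) (sh' 2 dia) (sh' 2 sup)).det) := by
  rw [Matrix.det_succ_column_zero]
  rw [Fin.sum_univ_succ, Fin.sum_univ_succ]
  have h0 : ∀ i : Fin n, ctri (n+2) sub dia sup (Fin.succ (Fin.succ i)) 0 = 0 := by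
    intro i
    rw [ctri_apply]
    simp only [Fin.val_succ, Fin.val_zero]
    split_ifs <;> first | rfl | tauto | omega
  have hz : (∑ i : Fin n, (-1:ℂ) ^ ((Fin.succ (Fin.succ i) : Fin (n+2)) : ℕ) *
      ctri (n+2) sub dia sup (Fin.succ (Fin.succ i)) 0 *
      ((ctri (n+2) sub dia sup).submatrix (Fin.succ (Fin.succ i)).succAbove Fin.succ).det) = 0 := by
    apply Finset.sum_eq_zero
    intro i _
    rw [h0 i]; ring
  rw [hz]
  have e00 : ctri (n+2) sub dia sup 0 0 = dia 1 := by rw [ctri_apply]; simp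
  have e10 : ctri (n+2) sub dia sup (Fin.succ 0) 0 = sub 2 := by
    rw [ctri_apply]; simp
  have hsub1 : ((ctri (n+2) sub dia sup).submatrix (0 : Fin (n+2)).succAbove Fin.succ)
      = ctri (n+1) (sh' 1 sub) (sh' 1 dia) (sh' 1 sup) := by
    ext i j
    rw [Matrix.submatrix_apply, ctri_apply, ctri_apply]
    simp only [Fin.val_succ, succAbove_val, Fin.val_zero, sh', Nat.not_lt_zero, if_false]
    split_ifs <;> first | rfl | tauto | omega
  have hsub2 : (((ctri (n+2) sub dia sup).submatrix (Fin.succ 0 : Fin (n+2)).succAbove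
      Fin.succ).submatrix Fin.succ (0 : Fin (n+1)).succAbove)
      = ctri n (sh' 2 sub) (sh' 2 dia) (sh' 2 sup) := by
    ext i j
    simp only [Matrix.submatrix_apply]
    rw [ctri_apply, ctri_apply]
    have hv : ((Fin.succ 0 : Fin (n+2)).succAbove (Fin.succ i)).val = i.val + 2 := by
      rw [succAbove_val]; simp
    have hv2 : ((0 : Fin (n+1)).succAbove j).val = j.val + 1 := by
      rw [succAbove_val]; simp
    rw [hv]
    simp only [Fin.val_succ, hv2, sh']
    split_ifs <;> first | rfl | tauto | omega
  have hrow : ((ctri (n+2) sub dia sup).submatrix (Fin.succ 0 : Fin (n+2)).succAbove Fin.succ).det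
      = sup 1 * (ctri n (sh' 2 sub) (sh' 2 dia) (sh' 2 sup)).det := by
    rw [Matrix.det_succ_row_zero, Fin.sum_univ_succ]
    have h00 : ((ctri (n+2) sub dia sup).submatrix (Fin.succ 0 : Fin (n+2)).succAbove Fin.succ) 0 0
        = sup 1 := by
      rw [Matrix.submatrix_apply, ctri_apply]
      have : ((Fin.succ 0 : Fin (n+2)).succAbove 0).val = 0 := by rw [succAbove_val]; simp
      rw [this]
      simp
    have hzz : (∑ j : Fin n, (-1:ℂ) ^ ((Fin.succ j : Fin (n+1)) : ℕ) *
        ((ctri (n+2) sub dia sup).submatrix (Fin.succ 0 : Fin (n+2)).succAbove Fin.succ) 0 (Fin.succ j) *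
        (((ctri (n+2) sub dia sup).submatrix (Fin.succ 0 : Fin (n+2)).succAbove Fin.succ).submatrix
          Fin.succ (Fin.succ j).succAbove).det) = 0 := by
      apply Finset.sum_eq_zero
      intro j _
      have : ((ctri (n+2) sub dia sup).submatrix (Fin.succ 0 : Fin (n+2)).succAbove Fin.succ) 0
          (Fin.succ j) = 0 := by
        rw [Matrix.submatrix_apply, ctri_apply]
        have : ((Fin.succ 0 : Fin (n+2)).succAbove 0).val = 0 := by rw [succAbove_val]; simp
        rw [this]
        simp only [Fin.val_succ]
        split_ifs <;> first | rfl | tauto | omega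
      rw [this]; ring
    rw [hzz, h00, hsub2]
    simp
  rw [e00, e10, hsub1, hrow]
  simp
  ring


lemma D1_det (n : ℕ) : ∀ (A B C : ℕ → ℂ), D1 n A B C = (-1)^n * (ctri n C B A).det := by
  induction n using Nat.strong_induction_on with
  | _ n ih =>
    match n with
    | 0 =>
      intro A B C
      rw [D1_zero, Matrix.det_fin_zero]
      simp
    | 1 =>
      intro A B C
      rw [D1_one, Matrix.det_fin_one]
      have h : ctri 1 C B A 0 0 = B 1 := by rw [ctri_apply]; simp
      rw [h]
      ring
    | (k+2) =>
      intro A B C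
      rw [D1_step, Esum_step, sh_sh, sh_sh, sh_sh,
        ih (k+1) (by omega), ih k (by omega), ctri_det_rec]
      have h2 : sh' 1 C 1 = C 2 := rfl
      rw [h2]
      ring

/-- If `X` is invertible, `λ` is an eigenvalue of `W = X⁻¹ Y` and `n_j - λ r_j ≠ 0`
for all `j = 1, …, N-1`, then `λ` is a root of `D¹_N`. -/
theorem stmt2 (N : ℕ) (hN : 2 ≤ N) (p q r l m n : ℕ → ℝ)
    (hX : IsUnit (triMatC (N - 1) p q r).det)
    (lam : ℂ)
    (hlam : IsEig ((triMatC (N - 1) p q r)⁻¹ * triMatC (N - 1) l m n) lam)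
    (hA : ∀ j, 1 ≤ j → j ≤ N - 1 → (n j : ℂ) - lam * (r j : ℂ) ≠ 0) :
    D1 (N - 1) (fun j => (n j : ℂ) - lam * (r j : ℂ))
      (fun j => (m j : ℂ) - lam * (q j : ℂ))
      (fun j => (l j : ℂ) - lam * (p j : ℂ)) = 0 := by
  obtain ⟨v, hv, hmv⟩ := hlam
  set X := triMatC (N - 1) p q r with hXdef
  set Y := triMatC (N - 1) l m n with hYdef
  have hXY : X.mulVec ((X⁻¹ * Y).mulVec v) = Y.mulVec v := by
    rw [Matrix.mulVec_mulVec, ← Matrix.mul_assoc, Matrix.mul_nonsing_inv X hX, Matrix.one_mul]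
  have hsmul : X.mulVec (lam • v) = lam • X.mulVec v := by
    ext i
    simp [Matrix.mulVec, dotProduct, Finset.mul_sum]
    apply Finset.sum_congr rfl
    intro j _
    ring
  have hz : (Y - lam • X).mulVec v = 0 := by
    rw [Matrix.sub_mulVec, Matrix.smul_mulVec, ← hXY, hmv, hsmul, sub_self]
  have hdet : (Y - lam • X).det = 0 := by
    rw [← Matrix.exists_mulVec_eq_zero_iff]
    exact ⟨v, hv, hz⟩
  have hZ : Y - lam • X = ctri (N - 1)
      (fun j => (l j : ℂ) - lam * (p j : ℂ))
      (fun j => (m j : ℂ) - lam * (q j : ℂ))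
      (fun j => (n j : ℂ) - lam * (r j : ℂ)) := by
    ext i j
    rw [Matrix.sub_apply, Matrix.smul_apply, ctri_apply, hXdef, hYdef]
    show (if (i:ℕ) = j then ((m (i+1) : ℝ) : ℂ) else if (i:ℕ)+1 = j then ((n (i+1) : ℝ) : ℂ)
        else if (j:ℕ)+1 = i then ((l (i+1) : ℝ) : ℂ) else 0)
      - lam • (if (i:ℕ) = j then ((q (i+1) : ℝ) : ℂ) else if (i:ℕ)+1 = j then ((r (i+1) : ℝ) : ℂ)
        else if (j:ℕ)+1 = i then ((p (i+1) : ℝ) : ℂ) else 0) = _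
    simp only [smul_eq_mul]
    split_ifs <;> ring
  rw [D1_det, ← hZ, hdet, mul_zero]
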